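/- Let X be a rearrangement invariant function space on (0,∞). If L∞ embeds continuously into X, then X contains a lattice isometric copy of ℓ∞. -/

import Mathlib

open Filter Topology MeasureTheory Set

/-- A **Banach ideal space** on a measure space `(α, μ)`: a collection of (real-valued)
measurable functions with a complete lattice-compatible norm satisfying the ideal property. -/
structure BanachIdealSpace (α : Type*) [MeasurableSpace α] (μ : Measure α) where
  Mem : (α → ℝ) → Prop
  N : (α → ℝ) → ℝ
  mem_zero : Mem 0
  mem_add : ∀ f g, Mem f → Mem g → Mem (f + g)
  mem_smul : ∀ (c : ℝ) f, Mem f → Mem (c • f)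
  measurable : ∀ f, Mem f → AEMeasurable f μ
  N_nonneg : ∀ f, 0 ≤ N f
  N_zero : N 0 = 0
  N_eq_zero : ∀ f, Mem f → N f = 0 → (∀ᵐ x ∂μ, f x = 0)
  N_add : ∀ f g, Mem f → Mem g → N (f + g) ≤ N f + N g
  N_smul : ∀ (c : ℝ) f, N (c • f) = |c| * N f
  ideal : ∀ f g, AEMeasurable f μ → (∀ᵐ x ∂μ, |f x| ≤ |g x|) → Mem g →
    Mem f ∧ N f ≤ N g
  complete : ∀ u : ℕ → (α → ℝ), (∀ n, Mem (u n)) →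
    (∀ ε : ℝ, 0 < ε → ∃ n₀ : ℕ, ∀ m n, n₀ ≤ m → n₀ ≤ n → N (u m - u n) < ε) →
    ∃ f, Mem f ∧ Tendsto (fun n => N (u n - f)) atTop (𝓝 0)

namespace BanachIdealSpace

variable {α : Type*} [MeasurableSpace α] {μ : Measure α}

/-- Distance (w.r.t. a norm functional `N`) from `f` to a set `S` of functions. -/
noncomputable def distIn (N : (α → ℝ) → ℝ) (f : α → ℝ) (S : Set (α → ℝ)) : ℝ :=
  sInf ((fun g => N (f - g)) '' S)

/-- The set of **order continuous elements** of a (generalized) function space given by a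
membership predicate `Mem` and a norm `N`: those `f` such that every sequence `uₙ` with
`0 ≤ uₙ ≤ |f|` a.e., a.e. non-increasing and converging to `0` a.e., satisfies `N (uₙ) → 0`. -/
def ocSet (μ : Measure α) (Mem : (α → ℝ) → Prop) (N : (α → ℝ) → ℝ) : Set (α → ℝ) :=
  {f | Mem f ∧ ∀ u : ℕ → (α → ℝ), (∀ n, Mem (u n)) →
    (∀ n, ∀ᵐ x ∂μ, 0 ≤ u n x ∧ u n x ≤ |f x|) →
    (∀ n, ∀ᵐ x ∂μ, u (n + 1) x ≤ u n x) →
    (∀ᵐ x ∂μ, Tendsto (fun n => u n x) atTop (𝓝 0)) →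
    Tendsto (fun n => N (u n)) atTop (𝓝 0)}

/-- The ideal `X_a` of order continuous elements of a Banach ideal space `X`. -/
def oc (X : BanachIdealSpace α μ) : Set (α → ℝ) := ocSet μ X.Mem X.N

/-- An **order ideal** of a Banach ideal space: a closed solid linear subspace. -/
structure IsOrderIdeal (X : BanachIdealSpace α μ) (J : Set (α → ℝ)) : Prop where
  subset : ∀ f ∈ J, X.Mem f
  zero : (0 : α → ℝ) ∈ J
  add : ∀ f g, f ∈ J → g ∈ J → f + g ∈ J
  smul : ∀ (c : ℝ) f, f ∈ J → c • f ∈ J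
  solid : ∀ f g, f ∈ J → X.Mem g → (∀ᵐ x ∂μ, |g x| ≤ |f x|) → g ∈ J
  closed : ∀ (u : ℕ → (α → ℝ)) f, (∀ n, u n ∈ J) → X.Mem f →
    Tendsto (fun n => X.N (f - u n)) atTop (𝓝 0) → f ∈ J

/-- The **Fatou property** of a Banach ideal space. -/
def Fatou (X : BanachIdealSpace α μ) : Prop :=
  ∀ (u : ℕ → (α → ℝ)) (f : α → ℝ), (∀ n, X.Mem (u n)) → AEMeasurable f μ →
    (∀ᵐ x ∂μ, 0 ≤ u 0 x) → (∀ᵐ x ∂μ, Monotone fun n => u n x) →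
    (∀ᵐ x ∂μ, Tendsto (fun n => u n x) atTop (𝓝 (f x))) →
    BddAbove (Set.range fun n => X.N (u n)) →
    X.Mem f ∧ Tendsto (fun n => X.N (u n)) atTop (𝓝 (X.N f))

/-- The **semi-Fatou property**: if `0 ≤ uₙ ↑ f ∈ X` then `‖uₙ‖ ↑ ‖f‖`. -/
def SemiFatou (X : BanachIdealSpace α μ) : Prop :=
  ∀ (u : ℕ → (α → ℝ)) (f : α → ℝ), (∀ n, X.Mem (u n)) → X.Mem f →
    (∀ᵐ x ∂μ, 0 ≤ u 0 x) → (∀ᵐ x ∂μ, Monotone fun n => u n x) →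
    (∀ᵐ x ∂μ, Tendsto (fun n => u n x) atTop (𝓝 (f x))) →
    Tendsto (fun n => X.N (u n)) atTop (𝓝 (X.N f))

/-- A Banach ideal space is **rearrangement invariant (symmetric)**: equimeasurable
functions belong to the space simultaneously and have equal norms. -/
def Symmetric (X : BanachIdealSpace α μ) : Prop :=
  ∀ f g, AEMeasurable f μ →
    (∀ lam : ℝ, 0 < lam → μ {x | lam < |f x|} = μ {x | lam < |g x|}) →
    X.Mem g → X.Mem f ∧ X.N f = X.N g

/-- The **non-increasing rearrangement** of a function `f` (w.r.t. the measure `μ`). -/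
noncomputable def rear (μ : Measure α) (f : α → ℝ) (t : ℝ) : ℝ :=
  sInf {lam : ℝ | 0 < lam ∧ μ {x | lam < |f x|} ≤ ENNReal.ofReal t}

/-- A (generalized) function space given by `(Mem, N)` contains a **lattice isometric copy
of `ℓ∞`**: there is a linear map from bounded sequences which preserves absolute values
(hence the lattice operations) and is an isometry for the sup norm on bounded sequences. -/
def HasLatticeCopyLinf (Mem : (α → ℝ) → Prop) (N : (α → ℝ) → ℝ) : Prop :=
  ∃ T : (ℕ → ℝ) → (α → ℝ),
    (∀ x y, T (x + y) = T x + T y) ∧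
    (∀ (c : ℝ) x, T (c • x) = c • T x) ∧
    (∀ x, T (fun n => |x n|) = fun t => |T x t|) ∧
    (∀ x : ℕ → ℝ, BddAbove (Set.range fun n => |x n|) →
      Mem (T x) ∧ N (T x) = ⨆ n, |x n|)

end BanachIdealSpace

open BanachIdealSpace

namespace AuxRI

lemma floor_eq_of_mem {m : ℕ} {t : ℝ} (h : t ∈ Set.Ico (m : ℝ) (m + 1)) : ⌊t⌋₊ = m := by
  have h0 : (0:ℝ) ≤ t := le_trans (Nat.cast_nonneg m) h.1
  rw [Nat.floor_eq_iff h0]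
  exact ⟨h.1, by exact_mod_cast h.2⟩

lemma meas_top (n : ℕ) :
    volume ({t : ℝ | (Nat.unpair ⌊t⌋₊).1 = n} ∩ Set.Ioi (0:ℝ)) = ⊤ := by
  set S : ℕ → Set ℝ := fun k =>
    Set.Ico ((Nat.pair n (k+1) : ℕ) : ℝ) ((Nat.pair n (k+1) : ℕ) + 1) with hS
  have hsub : (⋃ k, S k) ⊆ {t : ℝ | (Nat.unpair ⌊t⌋₊).1 = n} ∩ Set.Ioi (0:ℝ) := by
    rintro t ht
    simp only [Set.mem_iUnion] at ht
    obtain ⟨k, hk⟩ := ht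
    have hfl : ⌊t⌋₊ = Nat.pair n (k+1) := floor_eq_of_mem hk
    constructor
    · simp [hfl]
    · have h1 : (1:ℝ) ≤ (Nat.pair n (k+1) : ℝ) := by
        exact_mod_cast Nat.one_le_iff_ne_zero.2 (by
          intro h0
          have := Nat.right_le_pair n (k+1)
          omega)
      exact lt_of_lt_of_le (by linarith) hk.1
  have hdisj : Pairwise (Function.onFun Disjoint S) := by
    intro i j hij
    rw [Function.onFun, Set.disjoint_left]
    intro t hti htj
    have h1 : ⌊t⌋₊ = Nat.pair n (i+1) := floor_eq_of_mem hti
    have h2 : ⌊t⌋₊ = Nat.pair n (j+1) := floor_eq_of_mem htj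
    have := Nat.pair_eq_pair.1 (h1 ▸ h2)
    omega
  have htop : volume (⋃ k, S k) = ⊤ := by
    rw [measure_iUnion hdisj (fun k => measurableSet_Ico)]
    have : ∀ k : ℕ, volume (S k) = 1 := by
      intro k
      rw [hS]
      simp [Real.volume_Ico]
    simp only [this]
    exact ENNReal.tsum_const_eq_top_of_ne_zero one_ne_zero
  exact top_le_iff.1 (htop ▸ measure_mono hsub)

end AuxRI

open AuxRI

/-- Let `X` be a rearrangement invariant function space on `(0,∞)`. If `L∞` embeds
continuously into `X` (equivalently `χ_{(0,∞)} ∈ X`), then `X` contains a lattice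
isometric copy of `ℓ∞`. -/
theorem ri_space_with_Linf_contains_linf
    (X : BanachIdealSpace ℝ (volume.restrict (Set.Ioi (0 : ℝ))))
    (hsymm : X.Symmetric) (hLinf : X.Mem (fun _ => 1)) :
    HasLatticeCopyLinf X.Mem X.N := by
  classical
  set c := X.N (fun _ => 1) with hcdef
  have hc0 : 0 < c := by
    rcases (X.N_nonneg (fun _ => 1)).lt_or_eq with h | h
    · exact h
    · exfalso
      have h0 := X.N_eq_zero (fun _ => 1) hLinf h.symm
      rw [ae_iff] at h0
      have h1 : {a : ℝ | ¬ (fun _ : ℝ => (1:ℝ)) a = 0} = Set.univ := by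
        ext t; simp
      rw [h1, Measure.restrict_apply_univ, Real.volume_Ioi] at h0
      exact ENNReal.top_ne_zero h0
  set φ : ℝ → ℕ := fun t => (Nat.unpair ⌊t⌋₊).1 with hφdef
  have hφm : Measurable φ :=
    (measurable_from_top (f := fun m : ℕ => (Nat.unpair m).1)).comp Nat.measurable_floor
  refine ⟨fun x => fun t => c⁻¹ * x (φ t), ?_, ?_, ?_, ?_⟩
  · intro x y; funext t; simp only [Pi.add_apply]; ring
  · intro a x; funext t; simp only [Pi.smul_apply, smul_eq_mul]; ring
  · intro x; funext t
    rw [abs_mul, abs_of_nonneg (inv_nonneg.2 hc0.le)]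
  · intro x hbdd
    set s := ⨆ n, |x n| with hsdef
    have hs0 : 0 ≤ s := Real.iSup_nonneg fun n => abs_nonneg _
    have hle : ∀ n, |x n| ≤ s := fun n => le_ciSup hbdd n
    have hmeasT : AEMeasurable (fun t => c⁻¹ * x (φ t)) (volume.restrict (Set.Ioi (0 : ℝ))) :=
      (measurable_const.mul ((measurable_from_top (f := x)).comp hφm)).aemeasurable
    have hmemg : X.Mem ((s * c⁻¹) • fun _ => (1:ℝ)) := X.mem_smul _ _ hLinf
    have hNg : X.N ((s * c⁻¹) • fun _ => (1:ℝ)) = s := by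
      rw [X.N_smul, ← hcdef, abs_of_nonneg (mul_nonneg hs0 (inv_nonneg.2 hc0.le))]
      field_simp
    have hbound : ∀ᵐ t ∂(volume.restrict (Set.Ioi (0 : ℝ))),
        |c⁻¹ * x (φ t)| ≤ |((s * c⁻¹) • fun _ => (1:ℝ)) t| := by
      refine ae_of_all _ fun t => ?_
      have : |((s * c⁻¹) • fun _ => (1:ℝ)) t| = c⁻¹ * s := by
        simp [abs_of_nonneg (mul_nonneg hs0 (inv_nonneg.2 hc0.le)), mul_comm]
      rw [this, abs_mul, abs_of_nonneg (inv_nonneg.2 hc0.le)]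
      exact mul_le_mul_of_nonneg_left (hle _) (inv_nonneg.2 hc0.le)
    obtain ⟨hmemT, hTle⟩ := X.ideal _ _ hmeasT hbound hmemg
    rw [hNg] at hTle
    refine ⟨hmemT, le_antisymm hTle (ciSup_le fun n => ?_)⟩
    -- lower bound for each n
    set a := |x n| * c⁻¹ with hadef
    have ha0 : 0 ≤ a := mul_nonneg (abs_nonneg _) (inv_nonneg.2 hc0.le)
    set gn : ℝ → ℝ := fun t => if φ t = n then a else 0 with hgndef
    have hset : MeasurableSet {t : ℝ | φ t = n} := hφm (measurableSet_singleton n)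
    have hmeasgn : Measurable gn := Measurable.ite hset measurable_const measurable_const
    have hdist : ∀ lam : ℝ, 0 < lam →
        (volume.restrict (Set.Ioi (0 : ℝ))) {t | lam < |gn t|} =
          (volume.restrict (Set.Ioi (0 : ℝ))) {t | lam < |(a • fun _ => (1:ℝ)) t|} := by
      intro lam hlam
      by_cases hla : lam < a
      · have e1 : {t : ℝ | lam < |gn t|} = {t : ℝ | φ t = n} := by
          ext t
          by_cases h : φ t = n <;>
            simp [hgndef, h, abs_of_nonneg ha0, hla, not_lt.2 hlam.le]
        have e2 : {t : ℝ | lam < |(a • fun _ => (1:ℝ)) t|} = Set.univ := by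
          ext t; simp [abs_of_nonneg ha0, hla]
        rw [e1, e2, Measure.restrict_apply hset, Measure.restrict_apply_univ,
          Real.volume_Ioi, meas_top n]
      · have e1 : {t : ℝ | lam < |gn t|} = (∅ : Set ℝ) := by
          ext t
          by_cases h : φ t = n <;>
            simp [hgndef, h, abs_of_nonneg ha0, hla, not_lt.2 hlam.le]
        have e2 : {t : ℝ | lam < |(a • fun _ => (1:ℝ)) t|} = (∅ : Set ℝ) := by
          ext t; simp [abs_of_nonneg ha0, hla]
        rw [e1, e2]
    obtain ⟨hmemgn, hNgn⟩ :=
      hsymm gn (a • fun _ => (1:ℝ)) hmeasgn.aemeasurable hdist (X.mem_smul a _ hLinf)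
    have hNgn' : X.N gn = |x n| := by
      rw [hNgn, X.N_smul, ← hcdef, abs_of_nonneg ha0, hadef]
      field_simp
    have hbd2 : ∀ᵐ t ∂(volume.restrict (Set.Ioi (0 : ℝ))),
        |gn t| ≤ |c⁻¹ * x (φ t)| := by
      refine ae_of_all _ fun t => ?_
      by_cases h : φ t = n
      · simp only [hgndef, if_pos h, h]
        rw [abs_of_nonneg ha0, hadef, abs_mul, abs_of_nonneg (inv_nonneg.2 hc0.le), mul_comm]
      · simp [hgndef, if_neg h, abs_nonneg]
        positivity
    obtain ⟨_, hlow⟩ := X.ideal gn _ hmeasgn.aemeasurable hbd2 hmemT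
    rw [hNgn'] at hlow
    exact hlow
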